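/- Let h>0, a∈ℝ, ν∈(0,1], let y:(hℕ)_a→ℝ, and let m be a positive integer. Then (_aΔ_{h,*}^ν y^{2^m})(t) ≤ 2^m·y(t+νh)^{2^m−1}·(_aΔ_{h,*}^ν y)(t) for all t∈(hℕ)_{a+(1−ν)h}, where y^{2^m} denotes the function t↦y(t)^{2^m}. -/

import Mathlib

open Finset Filter Matrix

/-- The `h`-factorial function `t_h^(ν) = h^ν Γ(t/h+1)/Γ(t/h+1-ν)`. -/
noncomputable def hfact (h t ν : ℝ) : ℝ :=
  h ^ ν * Real.Gamma (t / h + 1) / Real.Gamma (t / h + 1 - ν)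

/-- The forward `h`-difference operator. -/
noncomputable def fdiff (h : ℝ) (y : ℝ → ℝ) (t : ℝ) : ℝ := (y (t + h) - y t) / h

/-- The Caputo-like `h`-difference of order `ν ∈ (0,1]` of `y : (hℕ)_a → ℝ`,
evaluated at the grid point `t = a + (1-ν)h + k·h` of `(hℕ)_{a+(1-ν)h}`. -/
noncomputable def caputoD (h a ν : ℝ) (y : ℝ → ℝ) (k : ℕ) : ℝ :=
  if ν = 1 then fdiff h y (a + (k : ℝ) * h)
  else (h / Real.Gamma (1 - ν)) *
    ∑ j ∈ Finset.range (k + 1),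
      hfact h (a + (1 - ν) * h + (k : ℝ) * h - (a + (j : ℝ) * h + h)) (-ν) *
        fdiff h y (a + (j : ℝ) * h)

/-- Tangent line inequality for even powers. -/
lemma tangent_aux (N : ℕ) (hN : Even N) (hN1 : 1 ≤ N) (b c : ℝ) :
    b ^ N + (N : ℝ) * b ^ (N - 1) * (c - b) ≤ c ^ N := by
  have hN2 : 2 ≤ N := by
    rcases hN with ⟨r, hr⟩; omega
  rcases eq_or_ne b 0 with hb | hb
  · subst hb
    rw [zero_pow (by omega), zero_pow (by omega)]
    simpa using hN.pow_nonneg c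
  · have hbN : 0 < b ^ N := hN.pow_pos hb
    set x := c / b - 1 with hx
    have hc : c = b * (1 + x) := by rw [hx]; field_simp; ring
    have key : 1 + (N : ℝ) * x ≤ (1 + x) ^ N := by
      rcases le_or_gt (-2 : ℝ) x with h2 | h2
      · exact one_add_mul_le_pow h2 N
      · have hp : (0:ℝ) ≤ (1+x)^N := hN.pow_nonneg _
        have hN1' : (1:ℝ) ≤ (N:ℝ) := by exact_mod_cast hN1
        nlinarith
    have hbn : b ^ (N-1) * b = b ^ N := by
      rw [← pow_succ]; congr 1; omega
    have h3 : b ^ N + (N:ℝ) * b ^ (N-1) * (c - b) = b ^ N * (1 + (N:ℝ) * x) := by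
      rw [hc, ← hbn]; ring
    rw [h3, hc, mul_pow]
    exact mul_le_mul_of_nonneg_left key hbN.le

/-- Abel summation. -/
lemma abel_aux (w g : ℕ → ℝ) (k : ℕ) :
    ∑ j ∈ Finset.range (k+1), w j * (g (j+1) - g j)
      = w k * g (k+1) - w 0 * g 0 - ∑ j ∈ Finset.range k, (w (j+1) - w j) * g (j+1) := by
  induction k with
  | zero => simp [mul_sub]
  | succ k ih => rw [Finset.sum_range_succ, ih, Finset.sum_range_succ]; ring

lemma sum_nonpos_aux (w g : ℕ → ℝ) (k : ℕ) (hw0 : 0 ≤ w 0)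
    (hmono : ∀ j, j < k → w j ≤ w (j+1)) (hg : ∀ j, 0 ≤ g j) (hgk : g (k+1) = 0) :
    ∑ j ∈ Finset.range (k+1), w j * (g (j+1) - g j) ≤ 0 := by
  rw [abel_aux, hgk]
  have h1 : 0 ≤ ∑ j ∈ Finset.range k, (w (j+1) - w j) * g (j+1) :=
    Finset.sum_nonneg fun j hj => mul_nonneg
      (by have := hmono j (Finset.mem_range.mp hj); linarith) (hg _)
  nlinarith [mul_nonneg hw0 (hg 0)]

theorem stmt13 (h a ν : ℝ) (hh : 0 < h) (hν0 : 0 < ν) (hν1 : ν ≤ 1)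
    (y : ℝ → ℝ) (m : ℕ) (hm : 1 ≤ m) :
    ∀ k : ℕ, caputoD h a ν (fun t => y t ^ (2 ^ m)) k
      ≤ (2 : ℝ) ^ m * y (a + ((k : ℝ) + 1) * h) ^ (2 ^ m - 1) * caputoD h a ν y k := by
  intro k
  set N := 2 ^ m with hNdef
  have hNeven : Even N := by
    refine ⟨2 ^ (m-1), ?_⟩
    rw [hNdef, ← two_mul, ← pow_succ']
    congr 1; omega
  have hN1 : 1 ≤ N := Nat.one_le_two_pow
  have hcast : ((N : ℕ) : ℝ) = (2:ℝ) ^ m := by rw [hNdef]; push_cast; ring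
  set b := y (a + ((k : ℝ) + 1) * h) with hbdef
  have htan : ∀ c : ℝ, b ^ N - c ^ N ≤ (2:ℝ)^m * b ^ (N-1) * (b - c) := by
    intro c
    have := tangent_aux N hNeven hN1 b c
    rw [hcast] at this
    linarith
  by_cases hν : ν = 1
  · subst hν
    have hxp : a + (k:ℝ) * h + h = a + ((k:ℝ) + 1) * h := by ring
    have e1 : caputoD h a 1 (fun t => y t ^ N) k
        = ((y (a + ((k:ℝ)+1) * h)) ^ N - (y (a + (k:ℝ) * h)) ^ N) / h := by
      simp [caputoD, fdiff, hxp]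
    have e2 : caputoD h a 1 y k
        = (y (a + ((k:ℝ)+1) * h) - y (a + (k:ℝ) * h)) / h := by
      simp [caputoD, fdiff, hxp]
    rw [e1, e2, ← mul_div_assoc, div_le_div_iff_of_pos_right hh]
    exact htan (y (a + (k:ℝ) * h))
  · simp only [caputoD, if_neg hν]
    have hν1' : ν < 1 := lt_of_le_of_ne hν1 hν
    set C := h / Real.Gamma (1 - ν) with hCdef
    have hC : 0 ≤ C := div_nonneg hh.le (Real.Gamma_pos_of_pos (by linarith)).le
    set D := (2:ℝ)^m * b ^ (N - 1) with hDdef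
    set w : ℕ → ℝ := fun j =>
      hfact h (a + (1 - ν) * h + (k : ℝ) * h - (a + (j : ℝ) * h + h)) (-ν) with hwdef
    set g : ℕ → ℝ := fun j => y (a + (j:ℝ) * h) ^ N - b ^ N - D * (y (a + (j:ℝ)*h) - b)
      with hgdef
    -- closed form of the kernel
    have hW : ∀ j : ℕ, w j
        = h ^ (-ν) * Real.Gamma ((k:ℝ) - j + 1 - ν) / Real.Gamma ((k:ℝ) - j + 1) := by
      intro j
      simp only [hwdef, hfact]
      have harg : (a + (1 - ν) * h + (k : ℝ) * h - (a + (j : ℝ) * h + h)) / h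
          = (k:ℝ) - j - ν := by field_simp; ring
      rw [harg, show (k:ℝ) - j - ν + 1 = (k:ℝ) - j + 1 - ν by ring,
        show (k:ℝ) - (j:ℝ) + 1 - ν - -ν = (k:ℝ) - j + 1 by ring]
    have hwpos : ∀ j : ℕ, j ≤ k → 0 < w j := by
      intro j hj
      rw [hW j]
      have hkj : (0:ℝ) ≤ (k:ℝ) - j := by
        have : (j:ℝ) ≤ (k:ℝ) := by exact_mod_cast hj
        linarith
      exact div_pos (mul_pos (Real.rpow_pos_of_pos hh _)
        (Real.Gamma_pos_of_pos (by linarith))) (Real.Gamma_pos_of_pos (by linarith))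
    have hwmono : ∀ j, j < k → w j ≤ w (j+1) := by
      intro j hj
      rw [hW j, hW (j+1)]
      have hr1 : (1:ℝ) ≤ (k:ℝ) - j := by
        have : ((j:ℝ) + 1) ≤ (k:ℝ) := by exact_mod_cast hj
        linarith
      set r : ℝ := (k:ℝ) - j with hrdef
      have hrν : 0 < r - ν := by linarith
      have hA : 0 < Real.Gamma (r - ν) := Real.Gamma_pos_of_pos hrν
      have hB : 0 < Real.Gamma r := Real.Gamma_pos_of_pos (by linarith)
      have hG1 : Real.Gamma (r + 1 - ν) = (r - ν) * Real.Gamma (r - ν) := by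
        rw [show r + 1 - ν = (r - ν) + 1 by ring, Real.Gamma_add_one hrν.ne']
      have hG2 : Real.Gamma (r + 1) = r * Real.Gamma r :=
        Real.Gamma_add_one (by linarith)
      have hj1 : (k:ℝ) - (j+1:ℕ) + 1 - ν = r - ν := by push_cast; ring
      have hj2 : (k:ℝ) - (j+1:ℕ) + 1 = r := by push_cast; ring
      rw [hj1, hj2, hG1, hG2]
      have hp : 0 < h ^ (-ν) := Real.rpow_pos_of_pos hh _
      rw [div_le_div_iff₀ (by positivity) (by positivity)]
      nlinarith [mul_pos (mul_pos hp hA) hB]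
    have hg0 : ∀ j, 0 ≤ g j := by
      intro j
      have := htan (y (a + (j:ℝ) * h))
      simp only [hgdef]
      linarith
    have hgk : g (k+1) = 0 := by
      simp only [hgdef]
      have : a + ((k+1:ℕ):ℝ) * h = a + ((k:ℝ) + 1) * h := by push_cast; ring
      rw [this, ← hbdef]
      ring
    have hsum : ∑ j ∈ Finset.range (k+1), w j * (g (j+1) - g j) ≤ 0 :=
      sum_nonpos_aux w g k (hwpos 0 (Nat.zero_le k)).le hwmono hg0 hgk
    -- rewrite the difference of the two caputo sums
    have hterm : ∀ j : ℕ,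
        w j * fdiff h (fun t => y t ^ N) (a + (j:ℝ) * h)
          - D * (w j * fdiff h y (a + (j:ℝ) * h))
        = w j * (g (j+1) - g j) / h := by
      intro j
      have hx : a + (j:ℝ) * h + h = a + ((j+1:ℕ):ℝ) * h := by push_cast; ring
      simp only [fdiff, hgdef, hx]
      field_simp
      ring
    have hkey : (∑ j ∈ Finset.range (k+1), w j * fdiff h (fun t => y t ^ N) (a + (j:ℝ)*h))
        - D * ∑ j ∈ Finset.range (k+1), w j * fdiff h y (a + (j:ℝ)*h)
        = (∑ j ∈ Finset.range (k+1), w j * (g (j+1) - g j)) / h := by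
      rw [Finset.mul_sum, ← Finset.sum_sub_distrib, Finset.sum_div]
      exact Finset.sum_congr rfl fun j _ => hterm j
    have hle : (∑ j ∈ Finset.range (k+1), w j * fdiff h (fun t => y t ^ N) (a + (j:ℝ)*h))
        - D * ∑ j ∈ Finset.range (k+1), w j * fdiff h y (a + (j:ℝ)*h) ≤ 0 := by
      rw [hkey]
      exact div_nonpos_of_nonpos_of_nonneg hsum hh.le
    have hfin : C * (∑ j ∈ Finset.range (k+1), w j * fdiff h (fun t => y t ^ N) (a + (j:ℝ)*h))
        ≤ C * (D * ∑ j ∈ Finset.range (k+1), w j * fdiff h y (a + (j:ℝ)*h)) :=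
      mul_le_mul_of_nonneg_left (by linarith) hC
    calc C * (∑ j ∈ Finset.range (k+1), w j * fdiff h (fun t => y t ^ N) (a + (j:ℝ)*h))
        ≤ C * (D * ∑ j ∈ Finset.range (k+1), w j * fdiff h y (a + (j:ℝ)*h)) := hfin
      _ = D * (C * ∑ j ∈ Finset.range (k+1), w j * fdiff h y (a + (j:ℝ)*h)) := by ring
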